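/- For all vectors a, b ∈ ℝ^N and all m ≥ 2, the inequality (|a|^(m-2) a − |b|^(m-2) b) · (a − b) ≥ 2^(2−m) |a − b|^m holds, where · denotes the Euclidean inner product and |·| the Euclidean norm. -/

import Mathlib

open Real

private lemma pow_two_rpow_half {d m : ℝ} (hd : 0 ≤ d) : (d ^ 2) ^ (m / 2) = d ^ m := by
  rw [← Real.rpow_natCast d 2, ← Real.rpow_mul hd]
  congr 1
  push_cast
  ring

private lemma rpow_superadd {x y p : ℝ} (hx : 0 ≤ x) (hy : 0 ≤ y) (hp : 1 ≤ p) :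
    x ^ p + y ^ p ≤ (x + y) ^ p := by
  have h := NNReal.add_rpow_le_rpow_add x.toNNReal y.toNNReal hp
  rw [← NNReal.coe_le_coe] at h
  push_cast [NNReal.coe_rpow, Real.coe_toNNReal x hx, Real.coe_toNNReal y hy] at h
  exact h

private lemma tartarE0 {m x y : ℝ} (hm : 2 ≤ m) (hy : 0 ≤ y) (hxy : y ≤ x) :
    (2:ℝ) ^ (2 - m) * (x - y) ^ m ≤ (x ^ (m-1) - y ^ (m-1)) * (x - y) := by
  have hd : 0 ≤ x - y := by linarith
  have h1 : y ^ (m-1) + (x - y) ^ (m-1) ≤ x ^ (m-1) := by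
    simpa using rpow_superadd hy hd (by linarith : 1 ≤ m - 1)
  have h2 : (2:ℝ) ^ (2 - m) ≤ 1 :=
    Real.rpow_le_one_of_one_le_of_nonpos (by norm_num) (by linarith)
  have h3 : (x - y) ^ m = (x - y) ^ (m-1) * (x - y) := by
    rcases eq_or_lt_of_le hd with h | h
    · rw [← h]
      simp [Real.zero_rpow (by linarith : m ≠ 0)]
    · have : (x - y) ^ ((m-1) + 1) = (x - y) ^ (m-1) * (x - y) :=
        Real.rpow_add_one (ne_of_gt h) _
      simpa using this
  have h4 : 0 ≤ (x - y) ^ (m-1) := Real.rpow_nonneg hd _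
  have h5 : (0:ℝ) < 2 ^ (2 - m) := Real.rpow_pos_of_pos (by norm_num) _
  rw [h3]
  nlinarith [mul_nonneg h4 hd]

private lemma tartarE1 {m x y : ℝ} (hm : 2 ≤ m) (hx : 0 ≤ x) (hy : 0 ≤ y) :
    (2:ℝ) ^ (2 - m) * (x + y) ^ m ≤ (x ^ (m-1) + y ^ (m-1)) * (x + y) := by
  have hp : (1:ℝ) ≤ m - 1 := by linarith
  have hconv := (convexOn_rpow hp).2 (Set.mem_Ici.2 hx) (Set.mem_Ici.2 hy)
    (by norm_num : (0:ℝ) ≤ 1/2) (by norm_num : (0:ℝ) ≤ 1/2) (by norm_num)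
  simp only [smul_eq_mul] at hconv
  -- hconv : (1/2*x + 1/2*y) ^ (m-1) ≤ 1/2 * x^(m-1) + 1/2 * y^(m-1)
  have hhalf : ((x + y)/2) ^ (m-1) = (x + y) ^ (m-1) * (1/2 : ℝ) ^ (m-1) := by
    rw [div_eq_mul_inv, Real.mul_rpow (by linarith) (by norm_num)]
    norm_num
  have h2 : (2:ℝ) ^ (2 - m) = 2 * (1/2 : ℝ) ^ (m-1) := by
    rw [one_div, Real.inv_rpow (by norm_num : (0:ℝ) ≤ 2), ← Real.rpow_neg (by norm_num)]
    rw [show (2:ℝ) - m = 1 + -(m-1) by ring, Real.rpow_add (by norm_num : (0:ℝ) < 2),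
      Real.rpow_one]
  have heq : (1/2 : ℝ) * x + 1/2 * y = (x + y)/2 := by ring
  rw [heq, hhalf] at hconv
  have h3 : (x + y) ^ m = (x + y) ^ (m-1) * (x + y) := by
    rcases eq_or_lt_of_le (by linarith : (0:ℝ) ≤ x + y) with h | h
    · rw [← h]; simp [Real.zero_rpow (by linarith : m ≠ 0)]
    · have : (x + y) ^ ((m-1) + 1) = (x + y) ^ (m-1) * (x + y) :=
        Real.rpow_add_one (ne_of_gt h) _
      simpa using this
  rw [h3, h2]
  nlinarith [Real.rpow_nonneg (by linarith : (0:ℝ) ≤ x + y) (m-1)]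

private lemma tartar_key_aux {m x y t : ℝ} (hm : 2 ≤ m) (hx : 0 < x) (hy : 0 < y)
    (ht : |t| ≤ x * y) (hxy : y ≤ x) :
    (2:ℝ) ^ (2 - m) * (x^2 + y^2 - 2*t) ^ (m/2) ≤
      x ^ m + y ^ m - (x ^ (m-2) + y ^ (m-2)) * t := by
  have ht1 : t ≤ x * y := (abs_le.1 ht).2
  have ht2 : -(x * y) ≤ t := (abs_le.1 ht).1
  set S : ℝ := x^2 + y^2 - 2*t with hS
  set θ : ℝ := (x*y - t)/(2*x*y) with hθ
  have hxy0 : 0 < x * y := mul_pos hx hy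
  have hθ0 : 0 ≤ θ := div_nonneg (by linarith) (by linarith)
  have hθ1 : θ ≤ 1 := by
    rw [div_le_one (by linarith)]; linarith
  have hcomb : S = (1 - θ) * (x - y)^2 + θ * (x + y)^2 := by
    field_simp [hθ, hS]
    have h2 : θ * (2*x*y) = x*y - t := by rw [hθ]; exact div_mul_cancel₀ _ (by positivity)
    rw [hS]; linear_combination (-2) * h2
  have hconv := (convexOn_rpow (by linarith : (1:ℝ) ≤ m/2)).2
    (Set.mem_Ici.2 (sq_nonneg (x - y))) (Set.mem_Ici.2 (sq_nonneg (x + y)))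
    (by linarith : (0:ℝ) ≤ 1 - θ) hθ0 (by ring)
  simp only [smul_eq_mul] at hconv
  rw [← hcomb] at hconv
  rw [pow_two_rpow_half (by linarith : (0:ℝ) ≤ x - y),
      pow_two_rpow_half (by linarith : (0:ℝ) ≤ x + y)] at hconv
  -- hconv : S ^ (m/2) ≤ (1-θ)*(x-y)^m + θ*(x+y)^m
  have e0 := tartarE0 hm hy.le hxy
  have e1 := tartarE1 hm hx.le hy.le
  have h2pos : (0:ℝ) < 2 ^ (2 - m) := Real.rpow_pos_of_pos (by norm_num) _
  have step : (2:ℝ) ^ (2 - m) * S ^ (m/2) ≤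
      (1 - θ) * ((x ^ (m-1) - y ^ (m-1)) * (x - y)) +
        θ * ((x ^ (m-1) + y ^ (m-1)) * (x + y)) := by
    have := mul_le_mul_of_nonneg_left hconv h2pos.le
    nlinarith [mul_le_mul_of_nonneg_left e0 (by linarith : (0:ℝ) ≤ 1 - θ),
      mul_le_mul_of_nonneg_left e1 hθ0]
  refine step.trans (le_of_eq ?_)
  have hx1 : x ^ (m-1) = x ^ (m-2) * x := by
    have : x ^ ((m-2) + 1) = x ^ (m-2) * x := Real.rpow_add_one hx.ne' _
    rw [← this]; congr 1; ring
  have hy1 : y ^ (m-1) = y ^ (m-2) * y := by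
    have : y ^ ((m-2) + 1) = y ^ (m-2) * y := Real.rpow_add_one hy.ne' _
    rw [← this]; congr 1; ring
  have hx2 : x ^ m = x ^ (m-2) * x^2 := by
    have : x ^ ((m-2) + 2) = x ^ (m-2) * x ^ (2:ℝ) := Real.rpow_add hx _ _
    rw [Real.rpow_two] at this
    rw [← this]; congr 1; ring
  have hy2 : y ^ m = y ^ (m-2) * y^2 := by
    have : y ^ ((m-2) + 2) = y ^ (m-2) * y ^ (2:ℝ) := Real.rpow_add hy _ _
    rw [Real.rpow_two] at this
    rw [← this]; congr 1; ring
  rw [hx1, hy1, hx2, hy2, hθ]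
  field_simp
  ring

private lemma tartar_key {m x y t : ℝ} (hm : 2 ≤ m) (hx : 0 < x) (hy : 0 < y)
    (ht : |t| ≤ x * y) :
    (2:ℝ) ^ (2 - m) * (x^2 + y^2 - 2*t) ^ (m/2) ≤
      x ^ m + y ^ m - (x ^ (m-2) + y ^ (m-2)) * t := by
  rcases le_total y x with h | h
  · exact tartar_key_aux hm hx hy ht h
  · have := tartar_key_aux hm hy hx (by rwa [mul_comm]) h
    have e : y^2 + x^2 - 2*t = x^2 + y^2 - 2*t := by ring
    rw [e] at this
    linarith

/-- Tartar's inequality, degenerate case `m ≥ 2`: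
`(|a|^(m-2) a − |b|^(m-2) b) · (a − b) ≥ 2^(2−m) |a − b|^m`. -/
theorem stmt2 {N : ℕ} (m : ℝ) (hm : 2 ≤ m) (a b : EuclideanSpace ℝ (Fin N)) :
    (2:ℝ) ^ (2 - m) * ‖a - b‖ ^ m ≤
      inner ℝ ((‖a‖ ^ (m - 2)) • a - (‖b‖ ^ (m - 2)) • b) (a - b) := by
  have hm0 : m ≠ 0 := by linarith
  have h21 : (2:ℝ) ^ (2 - m) ≤ 1 :=
    Real.rpow_le_one_of_one_le_of_nonpos (by norm_num) (by linarith)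
  rcases eq_or_ne a 0 with ha | ha
  · subst ha
    rcases eq_or_ne b 0 with hb | hb
    · subst hb
      simp [Real.zero_rpow hm0]
    · have hb0 : (0:ℝ) < ‖b‖ := norm_pos_iff.2 hb
      have : inner ℝ ((‖(0 : EuclideanSpace ℝ (Fin N))‖ ^ (m - 2)) • (0 : EuclideanSpace ℝ (Fin N))
          - (‖b‖ ^ (m - 2)) • b) ((0 : EuclideanSpace ℝ (Fin N)) - b)
          = ‖b‖ ^ (m-2) * ‖b‖^2 := by
        simp only [smul_zero, zero_sub, inner_neg_neg]
        rw [real_inner_smul_left, real_inner_self_eq_norm_sq]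
      rw [this]
      have hb2 : ‖b‖ ^ (m-2) * ‖b‖^2 = ‖b‖ ^ m := by
        have : ‖b‖ ^ ((m-2) + 2) = ‖b‖ ^ (m-2) * ‖b‖ ^ (2:ℝ) := Real.rpow_add hb0 _ _
        rw [Real.rpow_two] at this
        rw [← this]; congr 1; ring
      rw [hb2, zero_sub, norm_neg]
      nlinarith [Real.rpow_pos_of_pos hb0 m]
  · rcases eq_or_ne b 0 with hb | hb
    · subst hb
      have ha0 : (0:ℝ) < ‖a‖ := norm_pos_iff.2 ha
      have : inner ℝ ((‖a‖ ^ (m - 2)) • a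
          - (‖(0 : EuclideanSpace ℝ (Fin N))‖ ^ (m - 2)) • (0 : EuclideanSpace ℝ (Fin N)))
          (a - (0 : EuclideanSpace ℝ (Fin N)))
          = ‖a‖ ^ (m-2) * ‖a‖^2 := by
        simp only [smul_zero, sub_zero]
        rw [real_inner_smul_left, real_inner_self_eq_norm_sq]
      rw [this]
      have ha2 : ‖a‖ ^ (m-2) * ‖a‖^2 = ‖a‖ ^ m := by
        have : ‖a‖ ^ ((m-2) + 2) = ‖a‖ ^ (m-2) * ‖a‖ ^ (2:ℝ) := Real.rpow_add ha0 _ _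
        rw [Real.rpow_two] at this
        rw [← this]; congr 1; ring
      rw [ha2, sub_zero]
      nlinarith [Real.rpow_pos_of_pos ha0 m]
    · have ha0 : (0:ℝ) < ‖a‖ := norm_pos_iff.2 ha
      have hb0 : (0:ℝ) < ‖b‖ := norm_pos_iff.2 hb
      have hcs : |(inner ℝ a b : ℝ)| ≤ ‖a‖ * ‖b‖ := abs_real_inner_le_norm a b
      have ha2 : ‖a‖ ^ (m-2) * ‖a‖^2 = ‖a‖ ^ m := by
        have : ‖a‖ ^ ((m-2) + 2) = ‖a‖ ^ (m-2) * ‖a‖ ^ (2:ℝ) := Real.rpow_add ha0 _ _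
        rw [Real.rpow_two] at this
        rw [← this]; congr 1; ring
      have hb2 : ‖b‖ ^ (m-2) * ‖b‖^2 = ‖b‖ ^ m := by
        have : ‖b‖ ^ ((m-2) + 2) = ‖b‖ ^ (m-2) * ‖b‖ ^ (2:ℝ) := Real.rpow_add hb0 _ _
        rw [Real.rpow_two] at this
        rw [← this]; congr 1; ring
      have hinner : (inner ℝ ((‖a‖ ^ (m - 2)) • a - (‖b‖ ^ (m - 2)) • b) (a - b) : ℝ)
          = ‖a‖ ^ m + ‖b‖ ^ m - (‖a‖ ^ (m-2) + ‖b‖ ^ (m-2)) * (inner ℝ a b : ℝ) := by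
        rw [inner_sub_left, inner_sub_right, inner_sub_right,
          real_inner_smul_left, real_inner_smul_left, real_inner_smul_left,
          real_inner_smul_left, real_inner_self_eq_norm_sq, real_inner_self_eq_norm_sq,
          real_inner_comm b a]
        rw [← ha2, ← hb2]
        ring
      have hnorm : ‖a - b‖ ^ m
          = (‖a‖^2 + ‖b‖^2 - 2 * (inner ℝ a b : ℝ)) ^ (m/2) := by
        rw [← pow_two_rpow_half (norm_nonneg (a - b)) (m := m)]
        congr 1
        rw [norm_sub_sq_real]
        ring
      rw [hinner, hnorm]
      exact tartar_key hm ha0 hb0 hcs
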